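/- The formula ◆(p ∧ ¬p) → ◆q is not v₁-valid in G²±: there exists a bi-relational model and state w with v₁(◆(p∧¬p) → ◆q, w) < 1. -/

import Mathlib

open unitInterval

instance : Fact ((0:ℝ) ≤ 1) := ⟨zero_le_one⟩

/-- Gödel implication on [0,1]. -/
noncomputable def gimp (a b : I) : I := if a ≤ b then 1 else b

/-- Gödel coimplication on [0,1]. -/
noncomputable def gcoimp (a b : I) : I := if a ≤ b then 0 else a

/-- The language of G²± with ¬, ∧, →, ■, ◆. -/
inductive Fm : Type
  | var : ℕ → Fm
  | neg : Fm → Fm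
  | and : Fm → Fm → Fm
  | imp : Fm → Fm → Fm
  | box : Fm → Fm
  | dia : Fm → Fm

/-- A bi-relational G²± model. -/
structure Mdl where
  W : Type
  Rp : W → W → I
  Rm : W → W → I
  v1 : ℕ → W → I
  v2 : ℕ → W → I

/-- The pair (positive support, negative support) of a formula at a state. -/
noncomputable def Mdl.val (M : Mdl) : Fm → M.W → I × I
  | .var n, w => (M.v1 n w, M.v2 n w)
  | .neg φ, w => ((M.val φ w).2, (M.val φ w).1)
  | .and φ ψ, w => ((M.val φ w).1 ⊓ (M.val ψ w).1, (M.val φ w).2 ⊔ (M.val ψ w).2)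
  | .imp φ ψ, w => (gimp (M.val φ w).1 (M.val ψ w).1, gcoimp (M.val ψ w).2 (M.val φ w).2)
  | .box φ, w => (⨅ w', gimp (M.Rp w w') (M.val φ w').1, ⨅ w', gimp (M.Rm w w') (M.val φ w').2)
  | .dia φ, w => (⨆ w', (M.Rp w w') ⊓ (M.val φ w').1, ⨆ w', (M.Rm w w') ⊓ (M.val φ w').2)

noncomputable def Mdl.val1 (M : Mdl) (φ : Fm) (w : M.W) : I := (M.val φ w).1
noncomputable def Mdl.val2 (M : Mdl) (φ : Fm) (w : M.W) : I := (M.val φ w).2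

noncomputable def half : I := ⟨1/2, by norm_num, by norm_num⟩

noncomputable def M0 : Mdl := ⟨Unit, fun _ _ => 1, fun _ _ => 0, fun n _ => if n = 0 then half else 0, fun _ _ => half⟩

theorem dia_explosion_not_valid :
    ∃ (M : Mdl) (w : M.W),
      M.val1 (.imp (.dia (.and (.var 0) (.neg (.var 0)))) (.dia (.var 1))) w < 1 := by
  refine ⟨M0, (), ?_⟩
  have hsup : ∀ f : Unit → I, (⨆ w' : Unit, f w') = f () := fun f => by
    apply le_antisymm (iSup_le fun u => le_of_eq (by cases u; rfl)) (le_iSup f ())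
  simp only [Mdl.val1, Mdl.val, M0, hsup]
  norm_num [gimp, half]
  rw [if_neg]
  · exact zero_lt_one
  · intro h
    have := congrArg Subtype.val h
    norm_num at this
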